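/- For integers d ≥ 2 and 1 ≤ k' ≤ k, the map φ sending a vertex x = x_1x_2…x_k of F(d,k) to its suffix x_{k−k'+1}x_{k−k'+2}…x_k is a digraph homomorphism from F(d,k) to F(d,k'): φ(x) is a vertex of F(d,k') for every vertex x of F(d,k), and whenever there is an arc from x to y in F(d,k), there is an arc from φ(x) to φ(y) in F(d,k'). -/
import Mathlib


/-- A vertex of the d-Fibonacci digraph F(d,k): a sequence x : Fin k → ZMod d
such that whenever a digit is nonzero, the next digit is its successor mod d. -/
def fibIsVertex (d k : ℕ) (x : Fin k → ZMod d) : Prop :=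
  ∀ (i : ℕ) (h : i + 1 < k),
    x ⟨i, Nat.lt_of_succ_lt h⟩ ≠ 0 →
      x ⟨i + 1, h⟩ = x ⟨i, Nat.lt_of_succ_lt h⟩ + 1

/-- The arc relation of F(d,k): y is the left shift of x, and if the last digit
of x is nonzero then the last digit of y is its successor mod d. -/
def fibArc (d k : ℕ) (x y : Fin k → ZMod d) : Prop :=
  (∀ (i : ℕ) (h : i + 1 < k), y ⟨i, Nat.lt_of_succ_lt h⟩ = x ⟨i + 1, h⟩) ∧
  (∀ h : 0 < k, x ⟨k - 1, Nat.sub_lt h Nat.one_pos⟩ ≠ 0 →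
    y ⟨k - 1, Nat.sub_lt h Nat.one_pos⟩ = x ⟨k - 1, Nat.sub_lt h Nat.one_pos⟩ + 1)

/-- the suffix map x_1…x_k ↦ x_{k-k'+1}…x_k is a digraph
homomorphism from F(d,k) to F(d,k'). -/
theorem fib_suffix_hom (d k k' : ℕ) (hd : 2 ≤ d) (hk' : 1 ≤ k') (hkk : k' ≤ k) :
    (∀ x : Fin k → ZMod d, fibIsVertex d k x →
      fibIsVertex d k' (fun i : Fin k' => x ⟨k - k' + i.1, by have := i.isLt; omega⟩)) ∧
    (∀ x y : Fin k → ZMod d, fibIsVertex d k x → fibIsVertex d k y →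
      fibArc d k x y →
      fibArc d k' (fun i : Fin k' => x ⟨k - k' + i.1, by have := i.isLt; omega⟩)
        (fun i : Fin k' => y ⟨k - k' + i.1, by have := i.isLt; omega⟩)) := by
  constructor
  · intro x hx i h hne
    have h' : (k - k' + i) + 1 < k := by omega
    have := hx (k - k' + i) h' (by
      convert hne using 3)
    simp only at *
    convert this using 3 <;> omega
  · intro x y hx hy ⟨ha1, ha2⟩
    constructor
    · intro i h
      have h' : (k - k' + i) + 1 < k := by omega
      have := ha1 (k - k' + i) h'
      simp only at *
      convert this using 3 <;> omega
    · intro h hne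
      have hk : 0 < k := by omega
      simp only [Fin.val_mk] at hne ⊢
      have e : (⟨k - k' + (k' - 1), by omega⟩ : Fin k) = ⟨k - 1, Nat.sub_lt hk Nat.one_pos⟩ := by
        apply Fin.ext
        simp only [Fin.val_mk]
        omega
      have hne' : x ⟨k - 1, Nat.sub_lt hk Nat.one_pos⟩ ≠ 0 := by
        rw [← e]; exact hne
      have := ha2 hk hne'
      rw [← e] at this
      exact this
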